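/- Consider the first-order scheme on an N × N periodic grid (indices in ℤ/N) with constant ε, μ > 0 and cell sizes Δx, Δy > 0, in which all jump (dissipation) terms in the fluxes are dropped, i.e. the central fluxes H̃z_{i+1/2,j+1/2} = (1/4)(Hz_{i,j} + Hz_{i+1,j} + Hz_{i,j+1} + Hz_{i+1,j+1}), Ẽx_{i,j+1/2} = (1/4)(Ex_{i−1/2,j} + Ex_{i+1/2,j} + Ex_{i−1/2,j+1} + Ex_{i+1/2,j+1}), Ẽy_{i+1/2,j} = (1/4)(Ey_{i,j−1/2} + Ey_{i,j+1/2} + Ey_{i+1,j−1/2} + Ey_{i+1,j+1/2}) are used. Assume the differentiable grid functions satisfy the semi-discrete scheme. Then the discrete total energy E*_h(t) = Σ_{i,j} [ (Dx)²_{i+1/2,j} + (Dy)²_{i,j+1/2} ] ΔxΔy/(2ε) + Σ_{i,j} (Bz)²_{i,j} ΔxΔy/(2μ) is exactly conserved: d/dt E*_h(t) = 0 for all t. -/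

import Mathlib

private lemma shift_sum {N : ℕ} [NeZero N] (f : ZMod N → ZMod N → ℝ) (u v : ZMod N) :
    (∑ i : ZMod N, ∑ j : ZMod N, f (i + u) (j + v)) = ∑ i : ZMod N, ∑ j : ZMod N, f i j := by
  rw [← Equiv.sum_comp (Equiv.addRight u) (fun i => ∑ j : ZMod N, f i j)]
  refine Finset.sum_congr rfl fun i _ => ?_
  simpa using Equiv.sum_comp (Equiv.addRight v) (fun j => f (i + u) j)

private lemma cancelA {N : ℕ} [NeZero N] (a h : ZMod N → ZMod N → ℝ) :
    (∑ i : ZMod N, ∑ j : ZMod N,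
      (h i (j+1) * a i j + h (i+1) (j+1) * a i j - h i (j-1) * a i j - h (i+1) (j-1) * a i j
       + h i j * a (i-1) (j+1) + h i j * a i (j+1) - h i j * a (i-1) (j-1) - h i j * a i (j-1)))
      = 0 := by
  have e5 : (∑ i : ZMod N, ∑ j : ZMod N, h i j * a (i-1) (j+1)) =
      ∑ i : ZMod N, ∑ j : ZMod N, h (i+1) (j-1) * a i j := by
    have := shift_sum (fun i j => h i j * a (i-1) (j+1)) 1 (-1)
    simp only [← sub_eq_add_neg, add_sub_cancel_right, sub_add_cancel] at this
    exact this.symm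
  have e6 : (∑ i : ZMod N, ∑ j : ZMod N, h i j * a i (j+1)) =
      ∑ i : ZMod N, ∑ j : ZMod N, h i (j-1) * a i j := by
    have := shift_sum (fun i j => h i j * a i (j+1)) 0 (-1)
    simp only [← sub_eq_add_neg, add_zero, sub_add_cancel] at this
    exact this.symm
  have e7 : (∑ i : ZMod N, ∑ j : ZMod N, h i j * a (i-1) (j-1)) =
      ∑ i : ZMod N, ∑ j : ZMod N, h (i+1) (j+1) * a i j := by
    have := shift_sum (fun i j => h i j * a (i-1) (j-1)) 1 1
    simp only [add_sub_cancel_right] at this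
    exact this.symm
  have e8 : (∑ i : ZMod N, ∑ j : ZMod N, h i j * a i (j-1)) =
      ∑ i : ZMod N, ∑ j : ZMod N, h i (j+1) * a i j := by
    have := shift_sum (fun i j => h i j * a i (j-1)) 0 1
    simp only [add_zero, add_sub_cancel_right] at this
    exact this.symm
  simp only [Finset.sum_add_distrib, Finset.sum_sub_distrib]
  rw [e5, e6, e7, e8]
  ring

private lemma cancelB {N : ℕ} [NeZero N] (b h : ZMod N → ZMod N → ℝ) :
    (∑ i : ZMod N, ∑ j : ZMod N,
      (-(h (i+1) j * b i j) - h (i+1) (j+1) * b i j + h (i-1) j * b i j + h (i-1) (j+1) * b i j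
       - h i j * b (i+1) (j-1) - h i j * b (i+1) j + h i j * b (i-1) (j-1) + h i j * b (i-1) j))
      = 0 := by
  have f5 : (∑ i : ZMod N, ∑ j : ZMod N, h i j * b (i+1) (j-1)) =
      ∑ i : ZMod N, ∑ j : ZMod N, h (i-1) (j+1) * b i j := by
    have := shift_sum (fun i j => h i j * b (i+1) (j-1)) (-1) 1
    simp only [← sub_eq_add_neg, sub_add_cancel, add_sub_cancel_right] at this
    exact this.symm
  have f6 : (∑ i : ZMod N, ∑ j : ZMod N, h i j * b (i+1) j) =
      ∑ i : ZMod N, ∑ j : ZMod N, h (i-1) j * b i j := by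
    have := shift_sum (fun i j => h i j * b (i+1) j) (-1) 0
    simp only [← sub_eq_add_neg, add_zero, sub_add_cancel] at this
    exact this.symm
  have f7 : (∑ i : ZMod N, ∑ j : ZMod N, h i j * b (i-1) (j-1)) =
      ∑ i : ZMod N, ∑ j : ZMod N, h (i+1) (j+1) * b i j := by
    have := shift_sum (fun i j => h i j * b (i-1) (j-1)) 1 1
    simp only [add_sub_cancel_right] at this
    exact this.symm
  have f8 : (∑ i : ZMod N, ∑ j : ZMod N, h i j * b (i-1) j) =
      ∑ i : ZMod N, ∑ j : ZMod N, h (i+1) j * b i j := by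
    have := shift_sum (fun i j => h i j * b (i-1) j) 1 0
    simp only [add_zero, add_sub_cancel_right] at this
    exact this.symm
  simp only [Finset.sum_add_distrib, Finset.sum_sub_distrib, Finset.sum_neg_distrib]
  rw [f5, f6, f7, f8]
  ring

theorem first_order_central_flux_scheme_energy_conservation
    (N : ℕ) [NeZero N]
    (eps mu Δx Δy : ℝ) (heps : 0 < eps) (hmu : 0 < mu)
    (hΔx : 0 < Δx) (hΔy : 0 < Δy)
    (Dx Dy Bz Ex Ey Hz Ht Etx Ety : ZMod N → ZMod N → ℝ → ℝ)
    (hEx : ∀ i j t, Ex i j t = Dx i j t / eps)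
    (hEy : ∀ i j t, Ey i j t = Dy i j t / eps)
    (hHz : ∀ i j t, Hz i j t = Bz i j t / mu)
    (hHt : ∀ i j t, Ht i j t =
      (1/4) * (Hz i j t + Hz (i+1) j t + Hz i (j+1) t + Hz (i+1) (j+1) t))
    (hEtx : ∀ i j t, Etx i j t =
      (1/4) * (Ex (i-1) j t + Ex i j t + Ex (i-1) (j+1) t + Ex i (j+1) t))
    (hEty : ∀ i j t, Ety i j t =
      (1/4) * (Ey i (j-1) t + Ey i j t + Ey (i+1) (j-1) t + Ey (i+1) j t))
    (hdx : ∀ i j t, HasDerivAt (Dx i j) ((Ht i j t - Ht i (j-1) t) / Δy) t)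
    (hdy : ∀ i j t, HasDerivAt (Dy i j) (-((Ht i j t - Ht (i-1) j t) / Δx)) t)
    (hbz : ∀ i j t, HasDerivAt (Bz i j)
      (-((Ety i j t - Ety (i-1) j t) / Δx) + (Etx i j t - Etx i (j-1) t) / Δy) t) :
    ∀ t : ℝ, deriv (fun s =>
      (∑ i : ZMod N, ∑ j : ZMod N,
        ((Dx i j s) ^ 2 + (Dy i j s) ^ 2) * (Δx * Δy) / (2 * eps))
      + ∑ i : ZMod N, ∑ j : ZMod N, (Bz i j s) ^ 2 * (Δx * Δy) / (2 * mu)) t = 0 := by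
  intro t
  have hD := HasDerivAt.add
    (HasDerivAt.sum (u := Finset.univ) (fun i _ => HasDerivAt.sum (u := Finset.univ) (fun j _ =>
      ((((hdx i j t).pow 2).add ((hdy i j t).pow 2)).mul_const (Δx*Δy)).div_const (2*eps))))
    (HasDerivAt.sum (u := Finset.univ) (fun i _ => HasDerivAt.sum (u := Finset.univ) (fun j _ =>
      (((hbz i j t).pow 2).mul_const (Δx*Δy)).div_const (2*mu))))
  have hD' : HasDerivAt (fun s =>
      (∑ i : ZMod N, ∑ j : ZMod N,
        ((Dx i j s) ^ 2 + (Dy i j s) ^ 2) * (Δx * Δy) / (2 * eps))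
      + ∑ i : ZMod N, ∑ j : ZMod N, (Bz i j s) ^ 2 * (Δx * Δy) / (2 * mu)) _ t :=
    hD.congr_of_eventuallyEq (Filter.Eventually.of_forall fun s => by
      simp [Finset.sum_apply])
  rw [hD'.deriv]
  trans (Δx / 4 * (∑ i : ZMod N, ∑ j : ZMod N,
      (Bz i (j+1) t / mu * (Dx i j t / eps) + Bz (i+1) (j+1) t / mu * (Dx i j t / eps)
       - Bz i (j-1) t / mu * (Dx i j t / eps) - Bz (i+1) (j-1) t / mu * (Dx i j t / eps)
       + Bz i j t / mu * (Dx (i-1) (j+1) t / eps) + Bz i j t / mu * (Dx i (j+1) t / eps)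
       - Bz i j t / mu * (Dx (i-1) (j-1) t / eps) - Bz i j t / mu * (Dx i (j-1) t / eps)))
    + Δy / 4 * (∑ i : ZMod N, ∑ j : ZMod N,
      (-(Bz (i+1) j t / mu * (Dy i j t / eps)) - Bz (i+1) (j+1) t / mu * (Dy i j t / eps)
       + Bz (i-1) j t / mu * (Dy i j t / eps) + Bz (i-1) (j+1) t / mu * (Dy i j t / eps)
       - Bz i j t / mu * (Dy (i+1) (j-1) t / eps) - Bz i j t / mu * (Dy (i+1) j t / eps)
       + Bz i j t / mu * (Dy (i-1) (j-1) t / eps) + Bz i j t / mu * (Dy (i-1) j t / eps))))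
  · simp only [Finset.mul_sum, ← Finset.sum_add_distrib]
    refine Finset.sum_congr rfl fun i _ => Finset.sum_congr rfl fun j _ => ?_
    simp only [hHt, hEtx, hEty, hHz, hEx, hEy]
    have heps' := heps.ne'
    have hmu' := hmu.ne'
    have hΔx' := hΔx.ne'
    have hΔy' := hΔy.ne'
    field_simp
    ring
  · rw [cancelA (fun i j => Dx i j t / eps) (fun i j => Bz i j t / mu),
        cancelB (fun i j => Dy i j t / eps) (fun i j => Bz i j t / mu)]
    ring
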